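/- arXiv:1510.06450 — 5 statements merged into one kernel-verified Lean document; each statement's English description precedes it below -/
import Mathlib

section
/- Let p be an odd prime and u ∈ 1 + pℤ_p with u ≠ 1. For integers i, j and k ≥ n + 1 ≥ 2, the quotient of the p^k-th cyclotomic polynomial evaluated at u^(j−i), divided by p, i.e. ((u^(j−i))^(p^k) − 1)/(p·((u^(j−i))^(p^{k−1}) − 1)), lies in 1 + p^n ℤ_p, provided i ≠ j. -/
open Finset

section Aux

variable {p : ℕ} [Fact p.Prime]

private lemma aux_dvd_pow_sub_one {w : ℤ_[p]} (h : (p:ℤ_[p]) ∣ w - 1) (r : ℕ) :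
    (p:ℤ_[p]) ∣ w ^ r - 1 := by
  have h2 := sub_dvd_pow_sub_pow w 1 r
  simp only [one_pow] at h2
  exact h.trans h2

private lemma aux_dvd_geom_sum_sub {w : ℤ_[p]} (h : (p:ℤ_[p]) ∣ w - 1) (N : ℕ) :
    (p:ℤ_[p]) ∣ (∑ r ∈ range N, w ^ r) - N := by
  have h2 : (∑ r ∈ range N, w ^ r) - (N:ℤ_[p]) = ∑ r ∈ range N, (w ^ r - 1) := by
    rw [Finset.sum_sub_distrib]; simp
  rw [h2]
  exact Finset.dvd_sum fun r _ => aux_dvd_pow_sub_one h r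

private lemma aux_geom_sum_eq (hp : Odd p) {y : ℤ_[p]} {n : ℕ} (hn : 1 ≤ n)
    (h : (p:ℤ_[p])^n ∣ y - 1) :
    ∃ c : ℤ_[p], ∑ r ∈ range p, y ^ r = p * (1 + p ^ n * c) := by
  have hp1 : (p:ℤ_[p]) ∣ y - 1 := (dvd_pow_self _ (by omega)).trans h
  set H : ℤ_[p] := ∑ r ∈ range p, ∑ s ∈ range r, y ^ s with hH
  have key : (∑ r ∈ range p, y ^ r) - p = (y - 1) * H := by
    have h2 : (∑ r ∈ range p, y ^ r) - (p:ℤ_[p]) = ∑ r ∈ range p, (y ^ r - 1) := by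
      rw [Finset.sum_sub_distrib]; simp
    rw [h2, hH, Finset.mul_sum]
    refine Finset.sum_congr rfl fun r _ => ?_
    rw [← geom_sum_mul, mul_comm]
  have hdvdH : (p:ℤ_[p]) ∣ H := by
    have h3 : (p:ℤ_[p]) ∣ H - (∑ r ∈ range p, (r:ℤ_[p])) := by
      have h4 : H - (∑ r ∈ range p, (r:ℤ_[p])) =
          ∑ r ∈ range p, ((∑ s ∈ range r, y ^ s) - r) := by
        rw [hH, Finset.sum_sub_distrib]
      rw [h4]
      exact Finset.dvd_sum fun r _ => aux_dvd_geom_sum_sub hp1 r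
    have h5 : (p:ℤ_[p]) ∣ (∑ r ∈ range p, (r:ℤ_[p])) := by
      have h6 : p ∣ (∑ r ∈ range p, r) := by
        have h7 := Finset.sum_range_id_mul_two p
        have h8 : p ∣ (∑ r ∈ range p, r) * 2 := by rw [h7]; exact Dvd.intro _ rfl
        have := Fact.out (p := p.Prime)
        exact (Nat.Coprime.dvd_of_dvd_mul_right
          (hp.coprime_two_right) h8)
      have : ((p:ℕ):ℤ_[p]) ∣ ((∑ r ∈ range p, r : ℕ) : ℤ_[p]) := by
        exact_mod_cast Nat.cast_dvd_cast h6
      simpa [Nat.cast_sum] using this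
    have := dvd_add h3 h5
    simpa using this
  obtain ⟨c, hc⟩ : (p:ℤ_[p])^(n+1) ∣ (∑ r ∈ range p, y ^ r) - p := by
    rw [key, pow_succ]
    exact mul_dvd_mul h hdvdH
  refine ⟨c, ?_⟩
  have : (∑ r ∈ range p, y ^ r) = p + p^(n+1) * c := by linear_combination hc
  rw [this]; ring

private lemma aux_pow_p_sub_one (hp : Odd p) {w : ℤ_[p]} (h : (p:ℤ_[p]) ∣ w - 1) :
    ∃ c : ℤ_[p], w ^ p - 1 = (w - 1) * ((p:ℤ_[p]) * (1 + p * c)) := by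
  obtain ⟨c, hc⟩ := aux_geom_sum_eq hp le_rfl (by simpa using h)
  refine ⟨c, ?_⟩
  rw [← geom_sum_mul, hc]; ring

private lemma aux_one_add_p_mul_ne_zero (c : ℤ_[p]) : 1 + (p:ℤ_[p]) * c ≠ 0 := by
  intro h
  have h1 : (1:ℤ_[p]) = -((p:ℤ_[p]) * c) := by linear_combination h
  have h2 := congrArg norm h1
  rw [norm_one, norm_neg] at h2
  have hle : ‖(p:ℤ_[p]) * c‖ ≤ ‖(p:ℤ_[p])‖ * 1 := by
    rw [norm_mul]
    exact mul_le_mul_of_nonneg_left (PadicInt.norm_le_one c) (norm_nonneg _)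
  rw [PadicInt.norm_p] at hle
  have hp2 : (2:ℝ) ≤ p := by exact_mod_cast (Fact.out (p := p.Prime)).two_le
  have : ((p:ℝ))⁻¹ < 1 := by
    rw [inv_lt_one_iff₀]; right; linarith
  linarith [h2, hle, this]

private lemma aux_pow_pow_facts (hp : Odd p) {w : ℤ_[p]} (h : (p:ℤ_[p]) ∣ w - 1)
    (hw : w ≠ 1) (e : ℕ) :
    (p:ℤ_[p])^(e+1) ∣ w ^ p ^ e - 1 ∧ w ^ p ^ e ≠ 1 := by
  induction e with
  | zero => simpa using ⟨h, hw⟩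
  | succ e ih =>
    obtain ⟨ihd, ihn⟩ := ih
    set z := w ^ p ^ e with hz
    have hzd : (p:ℤ_[p]) ∣ z - 1 := (dvd_pow_self _ (Nat.succ_ne_zero e)).trans ihd
    obtain ⟨c, hc⟩ := aux_pow_p_sub_one hp hzd
    have hzz : w ^ p ^ (e+1) = z ^ p := by rw [hz, ← pow_mul, ← pow_succ]
    constructor
    · rw [hzz, hc]
      have : (p:ℤ_[p])^(e+2) ∣ (z - 1) * (p:ℤ_[p]) := by
        rw [pow_succ]
        exact mul_dvd_mul ihd dvd_rfl
      calc (p:ℤ_[p])^(e+1+1) ∣ (z - 1) * (p:ℤ_[p]) := this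
        _ ∣ (z - 1) * ((p:ℤ_[p]) * (1 + p * c)) := by
            rw [← mul_assoc]; exact Dvd.intro _ rfl
    · rw [hzz]
      intro h1
      have h2 : (z - 1) * ((p:ℤ_[p]) * (1 + p * c)) = 0 := by
        rw [← hc, h1, sub_self]
      rcases mul_eq_zero.mp h2 with h3 | h3
      · exact ihn (by rwa [sub_eq_zero] at h3)
      · rcases mul_eq_zero.mp h3 with h4 | h4
        · exact (Nat.cast_ne_zero.mpr (Fact.out (p := p.Prime)).ne_zero) h4
        · exact aux_one_add_p_mul_ne_zero c h4

private lemma aux_pow_ne_one_of_not_dvd {w : ℤ_[p]} (h : (p:ℤ_[p]) ∣ w - 1)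
    (hw : w ≠ 1) {M : ℕ} (hM : ¬ p ∣ M) : w ^ M ≠ 1 := by
  intro h1
  have hgeo : (∑ r ∈ range M, w ^ r) * (w - 1) = 0 := by
    rw [geom_sum_mul, h1, sub_self]
  have hw1 : w - 1 ≠ 0 := sub_ne_zero.mpr hw
  have hs : (∑ r ∈ range M, w ^ r) = 0 := by
    rcases mul_eq_zero.mp hgeo with h2 | h2
    · exact h2
    · exact absurd h2 hw1
  have hdM : (p:ℤ_[p]) ∣ (M:ℤ_[p]) := by
    have h2 := aux_dvd_geom_sum_sub h M
    rw [hs, zero_sub, dvd_neg] at h2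
    exact h2
  apply hM
  obtain ⟨c, hc⟩ := hdM
  have : ‖(M:ℤ_[p])‖ < 1 := by
    rw [hc, norm_mul, PadicInt.norm_p]
    have hp2 : (2:ℝ) ≤ p := by exact_mod_cast (Fact.out (p := p.Prime)).two_le
    have h3 : ((p:ℝ))⁻¹ < 1 := by rw [inv_lt_one_iff₀]; right; linarith
    calc ((p:ℝ))⁻¹ * ‖c‖ ≤ ((p:ℝ))⁻¹ * 1 :=
          mul_le_mul_of_nonneg_left (PadicInt.norm_le_one c) (by positivity)
      _ < 1 := by rwa [mul_one]
  have h4 : ((p:ℤ) ∣ (M:ℤ)) := by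
    rw [← PadicInt.norm_int_lt_one_iff_dvd]
    exact_mod_cast this
  exact_mod_cast h4

private lemma aux_pow_ne_one (hp : Odd p) {w : ℤ_[p]} (h : (p:ℤ_[p]) ∣ w - 1)
    (hw : w ≠ 1) {N : ℕ} (hN : N ≠ 0) : w ^ N ≠ 1 := by
  set e := N.factorization p with he
  have hfac : p ^ e * (N / p ^ e) = N := Nat.ordProj_mul_ordCompl_eq_self N p
  have hM : ¬ p ∣ (N / p ^ e) := Nat.not_dvd_ordCompl Fact.out hN
  rw [← hfac, pow_mul]
  obtain ⟨hd, hne⟩ := aux_pow_pow_facts hp h hw e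
  have hz : (p:ℤ_[p]) ∣ w ^ p ^ e - 1 := (dvd_pow_self _ (Nat.succ_ne_zero e)).trans hd
  exact aux_pow_ne_one_of_not_dvd hz hne hM

/-- the subgroup of units congruent to 1 mod p -/
private def oneModP : Subgroup ℤ_[p]ˣ where
  carrier := {U | (p:ℤ_[p]) ∣ (U:ℤ_[p]) - 1}
  one_mem' := by simp
  mul_mem' := by
    intro a b ha hb
    have h2 : ((a*b : ℤ_[p]ˣ) : ℤ_[p]) - 1 = ((a:ℤ_[p]) - 1) * b + ((b:ℤ_[p]) - 1) := by
      rw [Units.val_mul]; ring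
    rw [Set.mem_setOf_eq, h2]
    exact dvd_add (ha.mul_right _) hb
  inv_mem' := by
    intro a ha
    have h2 : ((a⁻¹ : ℤ_[p]ˣ) : ℤ_[p]) - 1 = -(((a:ℤ_[p]) - 1) * (a⁻¹ : ℤ_[p]ˣ)) := by
      have h3 : ((a⁻¹ : ℤ_[p]ˣ) : ℤ_[p]) * a = 1 := by
        rw [← Units.val_mul, inv_mul_cancel, Units.val_one]
      linear_combination h3
    rw [Set.mem_setOf_eq, h2, dvd_neg]
    exact ha.mul_right _

end Aux

/-- Let `p` be an odd prime and `u ∈ 1 + pℤ_p` with `u ≠ 1`.  For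
integers `i ≠ j` and `k ≥ n + 1 ≥ 2`, the quotient
`((u^(j−i))^(p^k) − 1)/(p·((u^(j−i))^(p^(k−1)) − 1))` (which is `Φ_{p^k}(u^(j−i))/p`)
lies in `1 + p^n ℤ_p`. -/
theorem stmt2 (p : ℕ) [Fact p.Prime] (hp : Odd p) (u : ℚ_[p])
    (hu : ∃ a : ℤ_[p], u = 1 + (p : ℚ_[p]) * a) (hu1 : u ≠ 1)
    (i j : ℤ) (hij : i ≠ j) (n k : ℕ) (hn : 1 ≤ n) (hk : n + 1 ≤ k) :
    ∃ c : ℤ_[p],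
      ((u ^ (j - i)) ^ (p ^ k) - 1) / ((p : ℚ_[p]) * ((u ^ (j - i)) ^ (p ^ (k - 1)) - 1))
        = 1 + (p : ℚ_[p]) ^ n * (c : ℚ_[p]) := by
  obtain ⟨a, ha⟩ := hu
  set m : ℤ := j - i with hm
  have hm0 : m ≠ 0 := sub_ne_zero.mpr (Ne.symm hij)
  set w₀ : ℤ_[p] := 1 + (p:ℤ_[p]) * a with hw₀
  have hw₀u : ((w₀ : ℤ_[p]) : ℚ_[p]) = u := by rw [ha, hw₀]; push_cast; ring
  have hw₀d : (p:ℤ_[p]) ∣ w₀ - 1 := ⟨a, by rw [hw₀]; ring⟩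
  have hw₀ne : w₀ ≠ 1 := by
    intro h; apply hu1; rw [← hw₀u, h]; simp
  -- w₀ is a unit
  have hpinv : ((p:ℝ))⁻¹ < 1 := by
    have hp2 : (2:ℝ) ≤ p := by exact_mod_cast (Fact.out (p := p.Prime)).two_le
    rw [inv_lt_one_iff₀]; right; linarith
  have hU : IsUnit w₀ := by
    rw [PadicInt.isUnit_iff, hw₀]
    have hlt : ‖(p:ℤ_[p]) * a‖ < 1 := by
      rw [norm_mul, PadicInt.norm_p]
      calc ((p:ℝ))⁻¹ * ‖a‖ ≤ ((p:ℝ))⁻¹ * 1 :=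
            mul_le_mul_of_nonneg_left (PadicInt.norm_le_one a) (by positivity)
        _ < 1 := by rwa [mul_one]
    have hne : ‖(1:ℤ_[p])‖ ≠ ‖(p:ℤ_[p]) * a‖ := by
      rw [norm_one]; exact fun h => absurd (h ▸ hlt) (lt_irrefl _)
    rw [PadicInt.norm_add_eq_max_of_ne hne, norm_one]
    exact max_eq_left (le_of_lt (norm_one (α := ℤ_[p]) ▸ hlt))
  set U : ℤ_[p]ˣ := hU.unit with hUdef
  have hUval : (U : ℤ_[p]) = w₀ := hU.unit_spec
  set v : ℤ_[p] := ((U ^ m : ℤ_[p]ˣ) : ℤ_[p]) with hv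
  -- cast relation: (v : ℚ_p) = u ^ m
  have hx : ((v : ℤ_[p]) : ℚ_[p]) = u ^ m := by
    calc ((v : ℤ_[p]) : ℚ_[p])
        = ((Units.map (PadicInt.Coe.ringHom (p := p)).toMonoidHom (U ^ m) : ℚ_[p]ˣ) : ℚ_[p]) := by
          rw [hv, Units.coe_map]
          rfl
      _ = ((Units.map (PadicInt.Coe.ringHom (p := p)).toMonoidHom U : ℚ_[p]ˣ) : ℚ_[p]) ^ m := by
          rw [map_zpow]
          exact Units.val_zpow_eq_zpow_val _ m
      _ = u ^ m := by
          congr 1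
  -- v ∈ 1 + pℤ_p
  have hUmem : U ∈ (oneModP : Subgroup ℤ_[p]ˣ) := by
    show (p:ℤ_[p]) ∣ (U:ℤ_[p]) - 1
    rw [hUval]; exact hw₀d
  have hvd : (p:ℤ_[p]) ∣ v - 1 := Subgroup.zpow_mem _ hUmem m
  -- v ≠ 1
  have hvne : v ≠ 1 := by
    intro h1
    have h1' : ((U ^ m : ℤ_[p]ˣ) : ℤ_[p]) = 1 := by rw [← hv]; exact h1
    have hUm : U ^ m = 1 := Units.ext (by simpa using h1')
    have hnat : U ^ (m.natAbs) = 1 := by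
      rcases Int.natAbs_eq m with he | he
      · rw [← zpow_natCast, ← he, hUm]
      · rw [← zpow_natCast]
        rw [he, zpow_neg] at hUm
        exact inv_eq_one.mp hUm
    have : w₀ ^ (m.natAbs) = 1 := by
      rw [← hUval, ← Units.val_pow_eq_pow_val, hnat, Units.val_one]
    exact aux_pow_ne_one hp hw₀d hw₀ne (Int.natAbs_ne_zero.mpr hm0) this
  -- the element y = v ^ (p ^ (k-1))
  set yZ : ℤ_[p] := v ^ (p ^ (k-1)) with hyZ
  obtain ⟨hyd, hyne⟩ := aux_pow_pow_facts hp hvd hvne (k-1)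
  have hydn : (p:ℤ_[p])^n ∣ yZ - 1 := (pow_dvd_pow _ (by omega)).trans hyd
  obtain ⟨c, hGc⟩ := aux_geom_sum_eq hp hn hydn
  have hnum : yZ ^ p - 1 = (yZ - 1) * ((p:ℤ_[p]) * (1 + (p:ℤ_[p]) ^ n * c)) := by
    rw [← geom_sum_mul, hGc]; ring
  refine ⟨c, ?_⟩
  set Y : ℚ_[p] := ((yZ : ℤ_[p]) : ℚ_[p]) with hY
  have hx1 : (u ^ m) ^ (p ^ (k-1)) = Y := by
    rw [← hx, hY, hyZ]; push_cast; ring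
  have hx2 : (u ^ m) ^ (p ^ k) = Y ^ p := by
    have hk1 : k = (k-1) + 1 := by omega
    rw [hk1, pow_succ, pow_mul, hx1]
  have hYne : Y - 1 ≠ 0 := by
    rw [sub_ne_zero, hY]
    have h1 : yZ ≠ 1 := by rw [hyZ]; exact hyne
    intro hq
    exact h1 (Subtype.coe_injective hq)
  have hp0 : (p:ℚ_[p]) ≠ 0 := by
    exact_mod_cast Nat.cast_ne_zero.mpr (Fact.out (p := p.Prime)).ne_zero
  have hnumQ : Y ^ p - 1 = (Y - 1) * ((p:ℚ_[p]) * (1 + (p:ℚ_[p]) ^ n * c)) := by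
    have := congrArg (fun z : ℤ_[p] => (z : ℚ_[p])) hnum
    push_cast at this
    convert this using 2 <;> push_cast <;> ring
  rw [hx1, hx2, hnumQ, div_eq_iff (mul_ne_zero hp0 hYne)]
  ring
end

section
/- Let p be a prime, A = ℤ_p[[π]], and let ψ : A → A be the ℤ_p-linear operator determined by ψ((1+π)^i) = (1+π)^{i/p} if p ∣ i and ψ((1+π)^i) = 0 otherwise; let φ : A → A be the ring map sending π to (1+π)^p − 1, and q = φ(π)/π. Then for n ≥ 2, (φ^{n−1}(q)·A) ∩ A^{ψ=0} = φ^{n−1}(q)·(A^{ψ=0}); and for n = 1, (q·A) ∩ A^{ψ=0} = φ(π)·(A^{ψ=0}). -/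
open PowerSeries

/-- Let `A = ℤ_p[[π]]`, let `φ : A → A` be the (`ℤ_p`-algebra) ring map
sending `π ↦ (1+π)^p − 1`, and let `ψ : A → A` be the `ℤ_p`-linear operator determined by
`ψ((1+π)^i) = (1+π)^{i/p}` if `p ∣ i` and `ψ((1+π)^i) = 0` otherwise (its characterizing
projection property `ψ(φ(f)·g) = f·ψ(g)` is included).  Writing
`q = φ(π)/π = Σ_{i<p} (1+π)^i`, we have, for `n ≥ 2`,
`(φ^{n−1}(q)·A) ∩ A^{ψ=0} = φ^{n−1}(q)·(A^{ψ=0})`, and for `n = 1`,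
`(q·A) ∩ A^{ψ=0} = φ(π)·(A^{ψ=0})`. -/
theorem stmt6 (p : ℕ) [Fact p.Prime]
    (φ : PowerSeries ℤ_[p] →ₐ[ℤ_[p]] PowerSeries ℤ_[p])
    (hφ : φ X = (1 + X) ^ p - 1)
    (ψ : PowerSeries ℤ_[p] →ₗ[ℤ_[p]] PowerSeries ℤ_[p])
    (hψpow : ∀ i : ℕ, ψ ((1 + X) ^ i) = if p ∣ i then (1 + X) ^ (i / p) else 0)
    (hproj : ∀ f g : PowerSeries ℤ_[p], ψ (φ f * g) = f * ψ g) :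
    (∀ n : ℕ, 2 ≤ n → ∀ f : PowerSeries ℤ_[p],
      ((∃ g, f = (⇑φ)^[n - 1] (∑ i ∈ Finset.range p, (1 + X) ^ i) * g) ∧ ψ f = 0) ↔
        (∃ g, ψ g = 0 ∧ f = (⇑φ)^[n - 1] (∑ i ∈ Finset.range p, (1 + X) ^ i) * g)) ∧
    (∀ f : PowerSeries ℤ_[p],
      ((∃ g, f = (∑ i ∈ Finset.range p, (1 + X) ^ i) * g) ∧ ψ f = 0) ↔
        (∃ g, ψ g = 0 ∧ f = φ X * g)) := by
  have hp : p.Prime := Fact.out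
  set q : PowerSeries ℤ_[p] := ∑ i ∈ Finset.range p, (1 + X) ^ i with hq
  -- X * q = φ X
  have hXq : X * q = φ X := by
    have h := geom_sum_mul (1 + X : PowerSeries ℤ_[p]) p
    rw [hφ, ← h, hq]
    ring
  -- iterates of φ on q
  have hiter : ∀ k : ℕ, (⇑φ)^[k] q = ∑ i ∈ Finset.range p, (1 + X : PowerSeries ℤ_[p]) ^ (p ^ k * i) := by
    intro k
    induction k with
    | zero => simp [hq]
    | succ k ih =>
      rw [Function.iterate_succ_apply', ih, map_sum]
      refine Finset.sum_congr rfl fun i _ => ?_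
      rw [map_pow, map_add, map_one, hφ]
      have : (1 : PowerSeries ℤ_[p]) + ((1 + X) ^ p - 1) = (1 + X) ^ p := by ring
      rw [this, ← pow_mul]
      ring_nf
  -- constant coefficient of iterates is p
  have hconst : ∀ k : ℕ, constantCoeff (R := ℤ_[p]) ((⇑φ)^[k] q) = (p : ℤ_[p]) := by
    intro k
    rw [hiter k, map_sum]
    have : ∀ i ∈ Finset.range p,
        constantCoeff (R := ℤ_[p]) ((1 + X : PowerSeries ℤ_[p]) ^ (p ^ k * i)) = 1 := by
      intro i _
      rw [map_pow, map_add, constantCoeff_one, constantCoeff_X, add_zero, one_pow]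
    rw [Finset.sum_congr rfl this]
    simp
  have hpne : (p : ℤ_[p]) ≠ 0 := Nat.cast_ne_zero.mpr hp.ne_zero
  have hqne : ∀ k : ℕ, (⇑φ)^[k] q ≠ 0 := by
    intro k h
    apply hpne
    rw [← hconst k, h, map_zero]
  -- ψ q = 1
  have hψq : ψ q = 1 := by
    rw [hq, map_sum]
    rw [Finset.sum_congr rfl (fun i _ => hψpow i)]
    rw [Finset.sum_eq_single 0]
    · simp
    · intro i hi hne
      rw [if_neg]
      exact Nat.not_dvd_of_pos_of_lt (Nat.pos_of_ne_zero hne) (Finset.mem_range.mp hi)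
    · intro h
      exact absurd (Finset.mem_range.mpr hp.pos) h
  constructor
  · intro n hn f
    have h1 : n - 1 = (n - 2) + 1 := by omega
    constructor
    · rintro ⟨⟨g, rfl⟩, hψf⟩
      rw [h1, Function.iterate_succ_apply'] at hψf ⊢
      rw [hproj] at hψf
      have hg0 : ψ g = 0 := by
        rcases mul_eq_zero.mp hψf with h | h
        · exact absurd h (hqne (n - 2))
        · exact h
      exact ⟨g, hg0, rfl⟩
    · rintro ⟨g, hg, rfl⟩
      refine ⟨⟨g, rfl⟩, ?_⟩
      rw [h1, Function.iterate_succ_apply', hproj, hg, mul_zero]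
  · intro f
    constructor
    · rintro ⟨⟨g, rfl⟩, hψf⟩
      set h : PowerSeries ℤ_[p] := PowerSeries.mk fun n => coeff (R := ℤ_[p]) (n + 1) g with hh
      set c : ℤ_[p] := constantCoeff (R := ℤ_[p]) g with hc
      have hgdec : g = X * h + C (R := ℤ_[p]) c := eq_X_mul_shift_add_const g
      have hqg : q * g = φ X * h + c • q := by
        rw [hgdec, mul_add, ← mul_assoc, mul_comm q X, hXq, smul_eq_C_mul, mul_comm (C (R := ℤ_[p]) c) q]
      have hψqg : (0 : PowerSeries ℤ_[p]) = X * ψ h + C (R := ℤ_[p]) c := by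
        rw [← hψf, hqg, map_add, hproj, map_smul, hψq, smul_eq_C_mul, mul_one]
      have hc0 : c = 0 := by
        have := congrArg (constantCoeff (R := ℤ_[p])) hψqg
        simpa using this.symm
      have hψh : ψ h = 0 := by
        rw [hc0, map_zero, add_zero] at hψqg
        rcases mul_eq_zero.mp hψqg.symm with h' | h'
        · exact absurd h' X_ne_zero
        · exact h'
      refine ⟨h, hψh, ?_⟩
      rw [hgdec, hc0, map_zero, add_zero, ← mul_assoc, mul_comm q X, hXq]
    · rintro ⟨g, hg, rfl⟩
      refine ⟨⟨X * g, by rw [← hXq]; ring⟩, ?_⟩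
      rw [hproj, hg, mul_zero]
end

section
/- Let V be a 2-dimensional ℚ_p-vector space (more generally a free E-module of rank 2 for E/ℚ_p finite) with a linear operator φ satisfying φ² − (a_p/p^{k/2})φ + 1/p = 0, where k is even, v_p(a_p) ≥ k/2, and p > k. Given a lattice D with basis v, p^{k/2}φ(v) such that the matrix of φ in this basis is [[0, −p^{k/2−1}],[p^{−k/2}, a_p/p^{k/2}]], then for all n ≥ 0, (pφ)^n D ⊆ p^{−k/2+1} D. -/
/-- Let `V` be a 2-dimensional vector space over a field `E` complete
with a normalized nonarchimedean absolute value extending the `p`-adic one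
(`‖p‖ = p⁻¹`), with a linear operator `φ` satisfying
`φ² − (a_p/p^{k/2})φ + 1/p = 0`, where `k` is even, `v_p(a_p) ≥ k/2` and `p > k`.
Given the lattice `D` with basis `v, p^{k/2}φ(v)` so that the matrix of `φ` in this
basis is `[[0, −p^{k/2−1}], [p^{−k/2}, a_p/p^{k/2}]]`, then for all `n ≥ 0` we have
`(pφ)^n D ⊆ p^{−k/2+1} D`; in matrix terms, every entry of `(p·M)^n` has `p`-adic
valuation at least `−k/2 + 1`, i.e. norm at most `p^{k/2 − 1}`. -/
theorem stmt11 (p : ℕ) [Fact p.Prime] (hp : Odd p) (k : ℕ) (hk : Even k) (hk0 : 0 < k)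
    (hpk : k < p)
    (E : Type*) [NontriviallyNormedField E] [IsUltrametricDist E]
    (hpE : ‖(p : E)‖ = (p : ℝ)⁻¹)
    (a : E) (ha : ‖a‖ ≤ (p : ℝ)⁻¹ ^ (k / 2)) :
    ∀ (n : ℕ) (i j : Fin 2),
      ‖(((p : E) • (!![0, -(p : E) ^ (k / 2 - 1);
            ((p : E) ^ (k / 2))⁻¹, a / (p : E) ^ (k / 2)])) ^ n) i j‖
        ≤ (p : ℝ) ^ (k / 2 - 1) := by
  set m := k / 2 with hm
  have hppos : 0 < p := (Fact.out (p := p.Prime)).pos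
  have hp1 : (1 : ℝ) ≤ (p : ℝ) := by exact_mod_cast hppos
  have hp0 : (0 : ℝ) < (p : ℝ) := by exact_mod_cast hppos
  have hm1 : 1 ≤ m := by
    have h2 : 2 ≤ k := by
      rcases hk with ⟨r, hr⟩
      omega
    omega
  have hpne : (p : E) ≠ 0 := by
    intro h
    rw [h, norm_zero] at hpE
    exact absurd hpE.symm (by positivity)
  set N := ((p : E) • (!![0, -(p : E) ^ (m - 1);
      ((p : E) ^ m)⁻¹, a / (p : E) ^ m])) with hN
  -- entry norms of N
  have hN00 : N 0 0 = 0 := by simp [hN]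
  have hN01 : ‖N 0 1‖ = ((p : ℝ)⁻¹) ^ m := by
    have he : N 0 1 = (p : E) * (-(p : E) ^ (m - 1)) := rfl
    have : N 0 1 = -((p : E) ^ m) := by
      rw [he, mul_neg, ← pow_succ']
      congr 2
      omega
    rw [this, norm_neg, norm_pow, hpE]
  have hN10 : ‖N 1 0‖ = (p : ℝ) ^ (m - 1) := by
    have he : N 1 0 = (p : E) * ((p : E) ^ m)⁻¹ := rfl
    have hpm : (p : E) ^ m = (p : E) * (p : E) ^ (m - 1) := by
      rw [← pow_succ']
      congr 1
      omega
    have : N 1 0 = ((p : E) ^ (m - 1))⁻¹ := by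
      rw [he, hpm, mul_inv, ← mul_assoc, mul_inv_cancel₀ hpne, one_mul]
    rw [this, norm_inv, norm_pow, hpE, inv_pow, inv_inv]
  have hN11 : ‖N 1 1‖ ≤ (p : ℝ)⁻¹ := by
    have : N 1 1 = (p : E) * (a / (p : E) ^ m) := by simp [hN]
    rw [this, norm_mul, hpE, norm_div, norm_pow, hpE]
    have h1 : ‖a‖ / ((p:ℝ)⁻¹) ^ m ≤ 1 := by
      rw [div_le_one (by positivity)]
      exact ha
    calc (p:ℝ)⁻¹ * (‖a‖ / ((p:ℝ)⁻¹) ^ m) ≤ (p:ℝ)⁻¹ * 1 := by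
          exact mul_le_mul_of_nonneg_left h1 (by positivity)
      _ = (p:ℝ)⁻¹ := mul_one _
  -- bounds
  have hBle1 : ((p : ℝ)⁻¹) ^ m ≤ 1 := pow_le_one₀ (by positivity) (inv_le_one_of_one_le₀ hp1)
  have hinvle1 : (p : ℝ)⁻¹ ≤ 1 := inv_le_one_of_one_le₀ hp1
  have hCge1 : (1 : ℝ) ≤ (p : ℝ) ^ (m - 1) := one_le_pow₀ hp1
  have hBC : ((p : ℝ)⁻¹) ^ m * (p : ℝ) ^ (m - 1) = (p : ℝ)⁻¹ := by
    have hpm : (p : ℝ) ^ m = (p : ℝ) * (p : ℝ) ^ (m - 1) := by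
      rw [← pow_succ']
      congr 1
      omega
    rw [inv_pow, hpm, mul_inv, mul_assoc, inv_mul_cancel₀ (by positivity), mul_one]
  have key : ∀ n : ℕ, ‖(N ^ n) 0 0‖ ≤ 1 ∧ ‖(N ^ n) 0 1‖ ≤ ((p : ℝ)⁻¹) ^ m ∧
      ‖(N ^ n) 1 0‖ ≤ (p : ℝ) ^ (m - 1) ∧ ‖(N ^ n) 1 1‖ ≤ 1 := by
    intro n
    induction n with
    | zero =>
      refine ⟨?_, ?_, ?_, ?_⟩ <;> simp [Matrix.one_apply] <;> positivity
    | succ n ih =>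
      obtain ⟨h00, h01, h10, h11⟩ := ih
      have hmul : ∀ i j : Fin 2, (N ^ (n + 1)) i j
          = (N ^ n) i 0 * N 0 j + (N ^ n) i 1 * N 1 j := by
        intro i j
        rw [pow_succ, Matrix.mul_apply, Fin.sum_univ_two]
      refine ⟨?_, ?_, ?_, ?_⟩
      · rw [hmul, hN00, mul_zero, zero_add, norm_mul, hN10]
        calc ‖(N ^ n) 0 1‖ * (p : ℝ) ^ (m - 1)
            ≤ ((p : ℝ)⁻¹) ^ m * (p : ℝ) ^ (m - 1) :=
              mul_le_mul_of_nonneg_right h01 (by positivity)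
          _ = (p : ℝ)⁻¹ := hBC
          _ ≤ 1 := hinvle1
      · rw [hmul]
        refine (IsUltrametricDist.norm_add_le_max _ _).trans (max_le ?_ ?_)
        · rw [norm_mul, hN01]
          calc ‖(N ^ n) 0 0‖ * ((p : ℝ)⁻¹) ^ m ≤ 1 * ((p : ℝ)⁻¹) ^ m :=
                mul_le_mul_of_nonneg_right h00 (by positivity)
            _ = ((p : ℝ)⁻¹) ^ m := one_mul _
        · rw [norm_mul]
          calc ‖(N ^ n) 0 1‖ * ‖N 1 1‖ ≤ ((p : ℝ)⁻¹) ^ m * 1 :=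
                mul_le_mul h01 (hN11.trans hinvle1) (norm_nonneg _) (by positivity)
            _ = ((p : ℝ)⁻¹) ^ m := mul_one _
      · rw [hmul, hN00, mul_zero, zero_add, norm_mul, hN10]
        calc ‖(N ^ n) 1 1‖ * (p : ℝ) ^ (m - 1) ≤ 1 * (p : ℝ) ^ (m - 1) :=
              mul_le_mul_of_nonneg_right h11 (by positivity)
          _ = (p : ℝ) ^ (m - 1) := one_mul _
      · rw [hmul]
        refine (IsUltrametricDist.norm_add_le_max _ _).trans (max_le ?_ ?_)
        · rw [norm_mul, hN01]
          calc ‖(N ^ n) 1 0‖ * ((p : ℝ)⁻¹) ^ m ≤ (p : ℝ) ^ (m - 1) * ((p : ℝ)⁻¹) ^ m :=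
                mul_le_mul_of_nonneg_right h10 (by positivity)
            _ = (p : ℝ)⁻¹ := by rw [mul_comm]; exact hBC
            _ ≤ 1 := hinvle1
        · rw [norm_mul]
          calc ‖(N ^ n) 1 1‖ * ‖N 1 1‖ ≤ 1 * 1 :=
                mul_le_mul h11 (hN11.trans hinvle1) (norm_nonneg _) zero_le_one
            _ = 1 := one_mul 1
  intro n i j
  obtain ⟨h00, h01, h10, h11⟩ := key n
  fin_cases i <;> fin_cases j
  · exact h00.trans hCge1
  · exact h01.trans (hBle1.trans hCge1)
  · exact h10
  · exact h11.trans hCge1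
end

section
/- Let φ satisfy φ² − (a_p/p^{k/2})φ + 1/p = 0 on a rank-2 lattice D over 𝒪_E (E/ℚ_p finite), with v_p(a_p) ≥ k/2, k even, p > k, and φ(D) ⊆ p^{−k/2}D. Then 1 − φ is invertible on D ⊗ ℚ_p and (1 − φ)^{−1}(D) ⊆ p^{−k/2+1} D. Explicitly, (1−φ)^{−1} = (φ + 1 − a_p/p^{k/2})/(1 − a_p/p^{k/2} + 1/p), and the denominator 1 − a_p/p^{k/2} + 1/p has p-adic valuation −1. -/
/-- Let `φ` satisfy `φ² − (a_p/p^{k/2})φ + 1/p = 0` on a rank-2 lattice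
`D` over the ring of integers of a nonarchimedean field `E` (with `‖p‖ = p⁻¹`), with
`v_p(a_p) ≥ k/2`, `k` even, `p > k` and `φ(D) ⊆ p^{−k/2} D`.  Then `1 − φ` is invertible
on the ambient vector space, `(1 − φ)⁻¹(D) ⊆ p^{−k/2+1} D`, explicitly
`(1−φ)⁻¹ = (φ + 1 − a_p/p^{k/2})/(1 − a_p/p^{k/2} + 1/p)`, and the denominator
`1 − a_p/p^{k/2} + 1/p` has `p`-adic valuation `−1` (norm `p`). -/
theorem stmt12 (p : ℕ) [Fact p.Prime] (hp : Odd p) (k : ℕ) (hk : Even k) (hk0 : 0 < k)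
    (hpk : k < p)
    (E : Type*) [NontriviallyNormedField E] [IsUltrametricDist E]
    (hpE : ‖(p : E)‖ = (p : ℝ)⁻¹)
    (a : E) (ha : ‖a‖ ≤ (p : ℝ)⁻¹ ^ (k / 2))
    (V : Type*) [AddCommGroup V] [Module E V]
    (φ : V →ₗ[E] V)
    (hquad : φ ∘ₗ φ - (a / (p : E) ^ (k / 2)) • φ + ((p : E))⁻¹ • LinearMap.id = 0)
    (D : AddSubgroup V)
    (hDsmul : ∀ c : E, ‖c‖ ≤ 1 → ∀ x ∈ D, c • x ∈ D)
    (hfree : ∃ v w : V, ∀ x : V, x ∈ D ↔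
        ∃ b c : E, ‖b‖ ≤ 1 ∧ ‖c‖ ≤ 1 ∧ x = b • v + c • w)
    (hstab : ∀ x ∈ D, (p : E) ^ (k / 2) • φ x ∈ D) :
    Function.Bijective ⇑((LinearMap.id : V →ₗ[E] V) - φ) ∧
    (∀ x ∈ D, ∀ y : V, ((LinearMap.id : V →ₗ[E] V) - φ) y = x → (p : E) ^ (k / 2 - 1) • y ∈ D) ∧
    (((LinearMap.id : V →ₗ[E] V) - φ) ∘ₗ (φ + (1 - a / (p : E) ^ (k / 2)) • LinearMap.id)
        = (1 - a / (p : E) ^ (k / 2) + (p : E)⁻¹) • LinearMap.id) ∧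
    ‖1 - a / (p : E) ^ (k / 2) + (p : E)⁻¹‖ = (p : ℝ) := by
  have hp1 : (1 : ℝ) < (p : ℝ) := by
    exact_mod_cast (Fact.out : p.Prime).one_lt
  have hp0 : (0 : ℝ) < (p : ℝ) := lt_trans one_pos hp1
  set m := k / 2 with hm
  have hm1 : 1 ≤ m := by
    rcases hk with ⟨t, ht⟩
    omega
  set c : E := a / (p : E) ^ m with hc
  set d : E := 1 - c + (p : E)⁻¹ with hd
  -- norms
  have hpEne : (p : E) ≠ 0 := by
    intro h
    rw [h, norm_zero] at hpE
    exact (inv_pos.mpr hp0).ne' hpE.symm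
  have hpm_ne : ((p : E) ^ m) ≠ 0 := pow_ne_zero _ hpEne
  have hnorm_pm : ‖(p : E) ^ m‖ = (p : ℝ)⁻¹ ^ m := by rw [norm_pow, hpE]
  have hc_le : ‖c‖ ≤ 1 := by
    rw [hc, norm_div, hnorm_pm]
    rw [div_le_one (by positivity)]
    exact ha
  have h1c_le : ‖1 - c‖ ≤ 1 := by
    rw [sub_eq_add_neg]
    refine (IsUltrametricDist.norm_add_le_max 1 (-c)).trans ?_
    simp [hc_le]
  have hpinv : ‖(p : E)⁻¹‖ = (p : ℝ) := by
    rw [norm_inv, hpE, inv_inv]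
  have hd_norm : ‖d‖ = (p : ℝ) := by
    rw [hd]
    rw [IsUltrametricDist.norm_add_eq_max_of_norm_ne_norm
      (by rw [hpinv]; exact (h1c_le.trans_lt hp1).ne)]
    rw [hpinv]
    exact max_eq_right (h1c_le.trans hp1.le)
  have hd_ne : d ≠ 0 := by
    intro h
    rw [h, norm_zero] at hd_norm
    exact hp0.ne hd_norm
  -- the quadratic relation pointwise
  have hq : ∀ x : V, φ (φ x) = c • φ x - (p : E)⁻¹ • x := by
    intro x
    have := LinearMap.congr_fun hquad x
    simp only [LinearMap.add_apply, LinearMap.sub_apply, LinearMap.comp_apply,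
      LinearMap.smul_apply, LinearMap.id_apply, LinearMap.zero_apply] at this
    linear_combination (norm := module) this
  -- inverse function
  set g : V → V := fun y => d⁻¹ • (φ y + (1 - c) • y) with hg
  have hleft : ∀ y : V, g (y - φ y) = y := by
    intro y
    have key : φ (y - φ y) + (1 - c) • (y - φ y) = d • y := by
      rw [map_sub, hq y, hd]; module
    rw [hg]
    simp only
    rw [key, smul_smul, inv_mul_cancel₀ hd_ne, one_smul]
  have hright : ∀ x : V, g x - φ (g x) = x := by
    intro x
    have key : (φ x + (1 - c) • x) - φ (φ x) - (1 - c) • φ x = d • x := by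
      rw [hq x, hd]; module
    rw [hg]
    simp only [map_smul, map_add, map_smul]
    calc d⁻¹ • (φ x + (1 - c) • x) - d⁻¹ • (φ (φ x) + (1 - c) • φ x)
        = d⁻¹ • ((φ x + (1 - c) • x) - φ (φ x) - (1 - c) • φ x) := by
          module
      _ = d⁻¹ • (d • x) := by rw [key]
      _ = x := by rw [smul_smul, inv_mul_cancel₀ hd_ne, one_smul]
  refine ⟨?_, ?_, ?_, ?_⟩
  · refine Function.bijective_iff_has_inverse.mpr ⟨g, ?_, ?_⟩
    · intro y
      simpa using hleft y
    · intro x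
      simpa using hright x
  · intro x hx y hy
    have hyx : y - φ y = x := by simpa using hy
    have hyg : y = d⁻¹ • (φ x + (1 - c) • x) := by
      rw [← hleft y, hyx, hg]
    have hsplit : (p : E) ^ (m - 1) • y
        = ((p : E) ^ (m - 1) * d⁻¹ * ((p : E) ^ m)⁻¹) • ((p : E) ^ m • φ x)
          + ((p : E) ^ (m - 1) * d⁻¹ * (1 - c)) • x := by
      rw [hyg]
      match_scalars <;> field_simp <;> ring
    have hdinv : ‖d⁻¹‖ = (p : ℝ)⁻¹ := by rw [norm_inv, hd_norm]
    have hpm1 : ‖(p : E) ^ (m - 1)‖ = (p : ℝ)⁻¹ ^ (m - 1) := by rw [norm_pow, hpE]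
    have hpowm : (p : ℝ)⁻¹ ^ (m - 1) * (p : ℝ)⁻¹ = (p : ℝ)⁻¹ ^ m := by
      rw [← pow_succ]
      congr 1
      omega
    have he1norm : ‖(p : E) ^ (m - 1) * d⁻¹ * ((p : E) ^ m)⁻¹‖ = 1 := by
      rw [norm_mul, norm_mul, hpm1, hdinv, norm_inv, hnorm_pm, hpowm]
      rw [mul_inv_cancel₀ (by positivity)]
    have he2norm : ‖(p : E) ^ (m - 1) * d⁻¹ * (1 - c)‖ ≤ 1 := by
      rw [norm_mul, norm_mul, hpm1, hdinv, hpowm]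
      calc (p : ℝ)⁻¹ ^ m * ‖1 - c‖ ≤ (p : ℝ)⁻¹ ^ m * 1 := by
            exact mul_le_mul_of_nonneg_left h1c_le (by positivity)
        _ ≤ 1 := by
            rw [mul_one]
            exact pow_le_one₀ (by positivity) (inv_le_one_of_one_le₀ hp1.le)
    rw [hsplit]
    exact D.add_mem (hDsmul _ he1norm.le _ (hstab x hx)) (hDsmul _ he2norm x hx)
  · ext x
    simp only [LinearMap.comp_apply, LinearMap.sub_apply, LinearMap.add_apply,
      LinearMap.smul_apply, LinearMap.id_apply, LinearMap.map_add, LinearMap.map_smul]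
    rw [hq x, hd]
    module
  · exact hd_norm
end

section
/- Let p be prime, F/ℚ_p finite unramified, and M ∈ I_d + π^{r}·M_{d×d}(B⁺_{F,rig}) a d×d matrix congruent to the identity modulo π^r, where 1 ≤ r ≤ p−1. Suppose M' = (t/π)^{r}·M^{−1} has entries in B⁺_{F,rig} and satisfies γ(M')·G_γ = M' for some G_γ ∈ I_d + π^{p−1}M_{d×d}(A⁺_F), where γ acts by π ↦ (1+π)^{χ(γ)} − 1 with χ(γ) ∈ 1 + pℤ_p a topological generator. If M' ≡ I_d mod π^j for some 1 ≤ j ≤ p−2, then M' ≡ I_d mod π^{j+1}; consequently M' ≡ I_d mod π^{p−1}. -/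
open PowerSeries

/-- The generalized binomial coefficient `C(u, k) = u(u−1)⋯(u−k+1)/k!` in `ℚ_p`. -/
noncomputable def padicBinom (p : ℕ) [Fact p.Prime] (u : ℚ_[p]) (k : ℕ) : ℚ_[p] :=
  (∏ i ∈ Finset.range k, (u - (i : ℚ_[p]))) / (k.factorial : ℚ_[p])

/-- The binomial power series `(1+π)^u = Σ_k C(u,k) π^k ∈ ℚ_p[[π]]` for `u ∈ ℤ_p`. -/
noncomputable def onePlusXPow (p : ℕ) [Fact p.Prime] (u : ℚ_[p]) : PowerSeries ℚ_[p] :=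
  PowerSeries.mk fun k => padicBinom p u k

/-- The power series `t/π = log(1+π)/π = Σ_k (−1)^k π^k/(k+1) ∈ ℚ_p[[π]]`. -/
noncomputable def tDivPi (p : ℕ) [Fact p.Prime] : PowerSeries ℚ_[p] :=
  PowerSeries.mk fun k => (-1 : ℚ_[p]) ^ k / (k + 1)

lemma aux_norm_sum_le {p : ℕ} [Fact p.Prime] {ι : Type*} (s : Finset ι) (f : ι → ℚ_[p])
    (c : ℝ) (hc : 0 ≤ c) (h : ∀ i ∈ s, ‖f i‖ ≤ c) : ‖∑ i ∈ s, f i‖ ≤ c := by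
  classical
  induction s using Finset.induction with
  | empty => simpa
  | insert a s hni ih =>
    rw [Finset.sum_insert hni]
    refine le_trans (Padic.nonarchimedean _ _) (max_le ?_ ?_)
    · exact h a (Finset.mem_insert_self a s)
    · exact ih fun i hi => h i (Finset.mem_insert_of_mem hi)

lemma aux_upow_ne_one (p : ℕ) [Fact p.Prime] (u : ℚ_[p]) (hu : ‖u - 1‖ ≤ (p : ℝ)⁻¹)
    (hune : u ≠ 1) (j : ℕ) (hj1 : 1 ≤ j) (hjp : j < p) : u ^ j ≠ 1 := by
  have hp2 : 2 ≤ p := (Fact.out : p.Prime).two_le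
  have hp1R : (1:ℝ) < p := by exact_mod_cast hp2.trans_lt' one_lt_two
  have hinv : (p : ℝ)⁻¹ < 1 := by
    rw [inv_lt_one_iff₀]; right; exact hp1R
  have hnu : ‖u‖ ≤ 1 := by
    have : u = (u - 1) + 1 := by ring
    rw [this]
    refine le_trans (Padic.nonarchimedean _ _) (max_le (hu.trans hinv.le) ?_)
    simp
  have hk : ∀ k : ℕ, ‖u ^ k - 1‖ ≤ (p : ℝ)⁻¹ := by
    intro k
    induction k with
    | zero => simp
    | succ n ih =>
      have : u ^ (n+1) - 1 = u * (u ^ n - 1) + (u - 1) := by ring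
      rw [this]
      refine le_trans (Padic.nonarchimedean _ _) (max_le ?_ hu)
      calc ‖u * (u ^ n - 1)‖ = ‖u‖ * ‖u ^ n - 1‖ := norm_mul _ _
        _ ≤ 1 * (p:ℝ)⁻¹ := by
            exact mul_le_mul hnu ih (norm_nonneg _) zero_le_one
        _ = (p:ℝ)⁻¹ := one_mul _
  intro habs
  have hS : (∑ i ∈ Finset.range j, u ^ i) * (u - 1) = 0 := by
    rw [geom_sum_mul, habs, sub_self]
  have hSne : (∑ i ∈ Finset.range j, u ^ i) = 0 := by
    rcases mul_eq_zero.mp hS with h | h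
    · exact h
    · exact absurd (sub_eq_zero.mp h) hune
  -- but the sum has norm 1
  have hjnorm : ‖(j : ℚ_[p])‖ = 1 := by
    have hle : ‖((j : ℤ) : ℚ_[p])‖ ≤ 1 := Padic.norm_int_le_one _
    have hnlt : ¬ ‖((j : ℤ) : ℚ_[p])‖ < 1 := by
      rw [Padic.norm_intCast_lt_one_iff]
      intro hdvd
      have : p ∣ j := Int.ofNat_dvd.mp hdvd
      exact absurd (Nat.le_of_dvd (by omega) this) (by omega)
    push_cast at hle hnlt
    linarith [lt_or_eq_of_le hle]
  have hsub : ‖(∑ i ∈ Finset.range j, u ^ i) - (j : ℚ_[p])‖ ≤ (p:ℝ)⁻¹ := by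
    have : (∑ i ∈ Finset.range j, u ^ i) - (j : ℚ_[p])
        = ∑ i ∈ Finset.range j, (u ^ i - 1) := by
      rw [Finset.sum_sub_distrib]
      simp
    rw [this]
    exact aux_norm_sum_le _ _ _ (by positivity) fun i _ => hk i
  have : ‖(∑ i ∈ Finset.range j, u ^ i)‖ = 1 := by
    have hrw : (∑ i ∈ Finset.range j, u ^ i)
        = ((∑ i ∈ Finset.range j, u ^ i) - (j : ℚ_[p])) + (j : ℚ_[p]) := by ring
    rw [hrw, Padic.add_eq_max_of_ne (by rw [hjnorm]; exact ne_of_lt (hsub.trans_lt hinv)),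
      hjnorm]
    exact max_eq_right (hsub.trans hinv.le)
  rw [hSne] at this
  simp at this

lemma aux_constCoeff_gamma (p : ℕ) [Fact p.Prime]
    (γ : PowerSeries ℚ_[p] →ₐ[ℚ_[p]] PowerSeries ℚ_[p])
    (h0 : constantCoeff (γ X) = 0) (f : PowerSeries ℚ_[p]) :
    constantCoeff (γ f) = constantCoeff f := by
  obtain ⟨g, hg⟩ : (X : PowerSeries ℚ_[p]) ∣ (f - C (constantCoeff f)) := by
    rw [X_dvd_iff]; simp
  have hf : f = C (constantCoeff f) + X * g := by
    rw [← hg]; ring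
  have hC : γ (C (constantCoeff f)) = C (constantCoeff f) := by
    have := γ.commutes (constantCoeff f)
    simpa [PowerSeries.algebraMap_apply] using this
  conv_lhs => rw [hf]
  rw [map_add, map_mul, hC, map_add, map_mul, h0, zero_mul, add_zero]
  simp

lemma aux_step (p : ℕ) [Fact p.Prime] (d : ℕ) (u : ℚ_[p])
    (γ : PowerSeries ℚ_[p] →ₐ[ℚ_[p]] PowerSeries ℚ_[p])
    (h0 : constantCoeff (γ X) = 0) (h1 : coeff 1 (γ X) = u)
    (M' Gγ : Matrix (Fin d) (Fin d) (PowerSeries ℚ_[p]))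
    (hG : ∃ NG, Gγ = 1 + (X : PowerSeries ℚ_[p]) ^ (p-1) • NG)
    (hrel : M'.map ⇑γ * Gγ = M')
    (j : ℕ) (hjp : j < p - 1) (huj : u ^ j ≠ 1)
    (hMj : ∃ N, M' = 1 + (X : PowerSeries ℚ_[p]) ^ j • N) :
    ∃ N, M' = 1 + (X : PowerSeries ℚ_[p]) ^ (j+1) • N := by
  obtain ⟨N, hN⟩ := hMj
  obtain ⟨NG, hNG⟩ := hG
  obtain ⟨h, hh⟩ : (X : PowerSeries ℚ_[p]) ∣ γ X := X_dvd_iff.mpr h0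
  have hhc : constantCoeff h = u := by
    have h2 := congrArg (coeff 1) hh
    rw [h1] at h2
    have h3 : coeff 1 ((X : PowerSeries ℚ_[p]) * h) = coeff 0 h := by
      simpa using coeff_X_pow_mul h 1 0
    rw [h3] at h2
    rw [← coeff_zero_eq_constantCoeff, ← h2]
  -- M'.map γ = 1 + (γ X)^j • N.map γ
  have hone : ∀ a c : Fin d, γ ((1 : Matrix (Fin d) (Fin d) (PowerSeries ℚ_[p])) a c)
      = (1 : Matrix (Fin d) (Fin d) (PowerSeries ℚ_[p])) a c := by
    intro a c
    rcases eq_or_ne a c with hac | hac <;> simp [Matrix.one_apply, hac]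
  have hmap : M'.map ⇑γ = 1 + (γ X) ^ j • N.map ⇑γ := by
    ext a c
    simp only [Matrix.map_apply, Matrix.add_apply, Matrix.smul_apply, smul_eq_mul, hN]
    rw [map_add, map_mul, map_pow, hone]
  have hexp : M'.map ⇑γ * Gγ = 1 + (γ X) ^ j • N.map ⇑γ + (X : PowerSeries ℚ_[p]) ^ (p-1) • NG
      + ((γ X) ^ j * (X : PowerSeries ℚ_[p]) ^ (p-1)) • (N.map ⇑γ * NG) := by
    rw [hmap, hNG, add_mul, one_mul, mul_add, mul_one, Matrix.smul_mul, Matrix.mul_smul,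
      smul_smul]
    abel
  rw [hexp, hN] at hrel
  have key : ∀ a b : Fin d, constantCoeff (N a b) = 0 := by
    intro a b
    have he := congrFun (congrFun hrel a) b
    simp only [Matrix.add_apply, Matrix.smul_apply, smul_eq_mul] at he
    have hc := congrArg (coeff j) he
    have cXj : ∀ f : PowerSeries ℚ_[p], coeff j ((X : PowerSeries ℚ_[p]) ^ j * f)
        = constantCoeff f := by
      intro f
      simpa using coeff_X_pow_mul f j 0
    have cgXj : ∀ f : PowerSeries ℚ_[p], coeff j ((γ X) ^ j * f)
        = u ^ j * constantCoeff f := by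
      intro f
      rw [hh, mul_pow, mul_assoc, cXj, map_mul, map_pow, hhc]
    have cXp : ∀ f : PowerSeries ℚ_[p], coeff j ((X : PowerSeries ℚ_[p]) ^ (p-1) * f)
        = 0 := by
      intro f
      exact X_pow_dvd_iff.mp (dvd_mul_right _ f) j hjp
    have cXp2 : coeff j (((γ X) ^ j * (X : PowerSeries ℚ_[p]) ^ (p-1))
        * (N.map ⇑γ * NG) a b) = 0 := by
      have : ((γ X) ^ j * (X : PowerSeries ℚ_[p]) ^ (p-1)) * (N.map ⇑γ * NG) a b
          = (X : PowerSeries ℚ_[p]) ^ (p-1) * ((γ X) ^ j * (N.map ⇑γ * NG) a b) := by ring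
      rw [this, cXp]
    rw [map_add, map_add, map_add, map_add, cgXj, cXp _, cXp2, add_zero, add_zero, cXj] at hc
    have hc2 : u ^ j * constantCoeff (N a b) = constantCoeff (N a b) := by
      have := aux_constCoeff_gamma p γ h0 (N a b)
      rw [Matrix.map_apply, this] at hc
      exact add_left_cancel hc
    have : (u ^ j - 1) * constantCoeff (N a b) = 0 := by linear_combination hc2
    rcases mul_eq_zero.mp this with h' | h'
    · exact absurd (sub_eq_zero.mp h') huj
    · exact h'
  have hdvd : ∀ a b : Fin d, (X : PowerSeries ℚ_[p]) ∣ N a b :=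
    fun a b => X_dvd_iff.mpr (key a b)
  choose N' hN' using fun a b => hdvd a b
  refine ⟨Matrix.of N', ?_⟩
  rw [hN]
  refine Matrix.ext fun a b => ?_
  simp only [Matrix.add_apply, Matrix.smul_apply, smul_eq_mul, Matrix.of_apply]
  rw [hN' a b, pow_succ]
  ring

/-- Let `M` be a `d×d` matrix over `B⁺_rig` congruent to the identity
modulo `π^r` (`1 ≤ r ≤ p−1`), and suppose `M' = (t/π)^r·M⁻¹` has entries in `B⁺_rig` and
satisfies `γ(M')·G_γ = M'` for some `G_γ ∈ I_d + π^{p−1} M_{d×d}(A⁺)` (entries with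
integral coefficients), where `γ` acts as the `ℚ_p`-algebra map with
`γ(π) = (1+π)^{χ(γ)} − 1`, `χ(γ) = u ∈ 1 + pℤ_p` a topological generator (`u ≠ 1`).
If `M' ≡ I_d (mod π^j)` for some `1 ≤ j ≤ p−2`, then `M' ≡ I_d (mod π^{j+1})`;
consequently `M' ≡ I_d (mod π^{p−1})`. -/
theorem stmt19 (p : ℕ) [Fact p.Prime] (hp : Odd p) (d r : ℕ)
    (hr1 : 1 ≤ r) (hr2 : r ≤ p - 1)
    (u : ℚ_[p]) (hu : ‖u - 1‖ ≤ (p : ℝ)⁻¹) (hune : u ≠ 1)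
    (γ : PowerSeries ℚ_[p] →ₐ[ℚ_[p]] PowerSeries ℚ_[p])
    (hγ : γ X = onePlusXPow p u - 1)
    (M M' Gγ : Matrix (Fin d) (Fin d) (PowerSeries ℚ_[p]))
    (hM : ∃ N : Matrix (Fin d) (Fin d) (PowerSeries ℚ_[p]),
      M = 1 + (X : PowerSeries ℚ_[p]) ^ r • N)
    (hM' : M' * M = (tDivPi p) ^ r • (1 : Matrix (Fin d) (Fin d) (PowerSeries ℚ_[p])))
    (hGγ : ∃ N : Matrix (Fin d) (Fin d) (PowerSeries ℚ_[p]),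
      (∀ a b : Fin d, ∀ k : ℕ, ‖PowerSeries.coeff k (N a b)‖ ≤ 1) ∧
        Gγ = 1 + (X : PowerSeries ℚ_[p]) ^ (p - 1) • N)
    (hrel : M'.map ⇑γ * Gγ = M') :
    (∀ j : ℕ, 1 ≤ j → j ≤ p - 2 →
      (∃ N, M' = 1 + (X : PowerSeries ℚ_[p]) ^ j • N) →
      ∃ N, M' = 1 + (X : PowerSeries ℚ_[p]) ^ (j + 1) • N) ∧
    (∃ N, M' = 1 + (X : PowerSeries ℚ_[p]) ^ (p - 1) • N) := by
  have hp3 : 3 ≤ p := by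
    have := (Fact.out : p.Prime).two_le
    rcases hp with ⟨k, hk⟩
    omega
  -- basic facts about γ X
  have h0 : constantCoeff (γ X) = 0 := by
    rw [hγ, map_sub, ← coeff_zero_eq_constantCoeff, onePlusXPow, coeff_mk, padicBinom]
    simp
  have h1 : coeff 1 (γ X) = u := by
    rw [hγ, map_sub, onePlusXPow, coeff_mk, padicBinom, coeff_one]
    simp
  have hG : ∃ NG, Gγ = 1 + (X : PowerSeries ℚ_[p]) ^ (p-1) • NG := by
    obtain ⟨N, _, hN⟩ := hGγ; exact ⟨N, hN⟩
  -- the induction step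
  have step : ∀ j : ℕ, 1 ≤ j → j ≤ p - 2 →
      (∃ N, M' = 1 + (X : PowerSeries ℚ_[p]) ^ j • N) →
      ∃ N, M' = 1 + (X : PowerSeries ℚ_[p]) ^ (j + 1) • N := by
    intro j hj1 hj2 hprev
    exact aux_step p d u γ h0 h1 M' Gγ hG hrel j (by omega)
      (aux_upow_ne_one p u hu hune j hj1 (by omega)) hprev
  refine ⟨step, ?_⟩
  -- base case : M' ≡ 1 mod X
  have c0 := (constantCoeff : PowerSeries ℚ_[p] →+* ℚ_[p])
  have hMc : M.map (constantCoeff) = 1 := by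
    obtain ⟨N, hMN⟩ := hM
    ext a b
    simp only [hMN, Matrix.map_apply, Matrix.add_apply, Matrix.smul_apply, smul_eq_mul,
      map_add, map_mul, map_pow, constantCoeff_X]
    rw [zero_pow (by omega), zero_mul, add_zero]
    rcases eq_or_ne a b with hab | hab <;> simp [Matrix.one_apply, hab]
  have htc : constantCoeff (tDivPi p) = 1 := by
    rw [← coeff_zero_eq_constantCoeff, tDivPi, coeff_mk]
    norm_num
  have hM'c : M'.map (constantCoeff) = 1 := by
    have hmapped := congrArg (fun A => A.map (constantCoeff)) hM'
    rw [Matrix.map_mul (f := (constantCoeff : PowerSeries ℚ_[p] →+* ℚ_[p])), hMc,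
      mul_one] at hmapped
    rw [hmapped]
    ext a b
    simp only [Matrix.map_apply, Matrix.smul_apply, smul_eq_mul, map_mul, map_pow, htc,
      one_pow, one_mul]
    rcases eq_or_ne a b with hab | hab <;> simp [Matrix.one_apply, hab]
  have base : ∃ N, M' = 1 + (X : PowerSeries ℚ_[p]) ^ 1 • N := by
    have hdvd : ∀ a b : Fin d, (X : PowerSeries ℚ_[p]) ∣
        (M' a b - (1 : Matrix (Fin d) (Fin d) (PowerSeries ℚ_[p])) a b) := by
      intro a b
      rw [X_dvd_iff, map_sub]
      have := congrFun (congrFun hM'c a) b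
      simp only [Matrix.map_apply, Matrix.one_apply] at this ⊢
      rcases eq_or_ne a b with hab | hab <;> simp [hab] at this ⊢ <;> simp [this]
    choose N0 hN0 using fun a b => hdvd a b
    refine ⟨Matrix.of N0, ?_⟩
    refine Matrix.ext fun a b => ?_
    simp only [Matrix.add_apply, Matrix.smul_apply, smul_eq_mul, Matrix.of_apply, pow_one]
    have := hN0 a b
    linear_combination this
  -- induct up to p - 1
  have main : ∀ k : ℕ, 1 ≤ k → k ≤ p - 1 → ∃ N, M' = 1 + (X : PowerSeries ℚ_[p]) ^ k • N := by
    intro k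
    induction k with
    | zero => omega
    | succ n ih =>
      intro h1' h2'
      rcases Nat.eq_zero_or_pos n with hn | hn
      · subst hn; exact base
      · exact step n hn (by omega) (ih hn (by omega))
  exact main (p - 1) (by omega) le_rfl
end
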